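/- (Binomial tail bound for BH-type counts) Let Y₁,…,Y_n be independent events with P(Y_i ≤ (k+l)β/N for the i-th p-value) ≤ (1+δ)(k+l)β/N for all k ≥ 1, l ≥ 0, where 2e(1+δ)β < 1. Define A_{k,l} as the event that at least k of the p-values are ≤ (k+l)β/N. Then P(A_{k,l}) ≤ C(n,k)·((k+l)(1+δ)β/N)^k, and the sequence a_{k,l} = C(n,k)((k+l)(1+δ)β/N)^k is non-increasing in k for k ≥ (1−γ)l when n ≤ (1−γ)N, using (1+1/(k+l))^k ≤ e^{k/(k+l)} and sup_{u≥1} restrictions giving ratio bound a_{k+1,l}/a_{k,l} ≤ 2√e(1+δ)β < 1. -/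

import Mathlib

open MeasureTheory ProbabilityTheory

set_option maxHeartbeats 1000000 in
open Classical in
/-- Binomial tail bound for BH-type counts: with `n ≤ (1-γ)N` independent p-values each
satisfying `P(pᵢ ≤ (k+l)β/N) ≤ (1+δ)(k+l)β/N`, the probability that at least `k` of them are
`≤ (k+l)β/N` is at most `C(n,k)((k+l)(1+δ)β/N)^k`, and this bound `a_{k,l}` is non-increasing
in `k` for `k ≥ (1-γ)l`. -/
theorem stmt_16 {Ω : Type*} [MeasureSpace Ω] [IsProbabilityMeasure (ℙ : Measure Ω)]
    (n N : ℕ) (hn : 1 ≤ n) (hN : 1 ≤ N) (γ β δ : ℝ) (hγ : 0 < γ) (hγ1 : γ < 1)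
    (hβ : 0 < β) (hδ : 0 ≤ δ) (hsmall : 2 * Real.exp 1 * (1 + δ) * β < 1)
    (hnN : (n : ℝ) ≤ (1 - γ) * N)
    (p : Fin n → Ω → ℝ) (hmeas : ∀ i, Measurable (p i))
    (hindep : iIndepFun p ℙ)
    (hmarg : ∀ i, ∀ k l : ℕ, 1 ≤ k →
      ℙ {ω | p i ω ≤ ((k : ℝ) + l) * β / N} ≤
        ENNReal.ofReal ((1 + δ) * ((k : ℝ) + l) * β / N)) :
    (∀ k l : ℕ, 1 ≤ k →
      ℙ {ω | k ≤ (Finset.univ.filter fun i => p i ω ≤ ((k : ℝ) + l) * β / N).card} ≤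
        ENNReal.ofReal ((n.choose k) * (((k : ℝ) + l) * (1 + δ) * β / N) ^ k)) ∧
    (∀ k l : ℕ, 1 ≤ k → (1 - γ) * l ≤ k →
      ((n.choose (k + 1)) : ℝ) * (((k : ℝ) + 1 + l) * (1 + δ) * β / N) ^ (k + 1) ≤
        (n.choose k) * (((k : ℝ) + l) * (1 + δ) * β / N) ^ k) := by
  have hN0 : (0:ℝ) < N := by exact_mod_cast hN
  constructor
  · intro k l hk
    set t : ℝ := ((k : ℝ) + l) * β / N with ht
    set c : ℝ := (1 + δ) * ((k : ℝ) + l) * β / N with hc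
    have hc0 : 0 ≤ c := by positivity
    have hsub : {ω | k ≤ (Finset.univ.filter fun i => p i ω ≤ t).card} ⊆
        ⋃ s ∈ Finset.univ.powersetCard k (α := Fin n), ⋂ i ∈ s, p i ⁻¹' Set.Iic t := by
      intro ω hω
      obtain ⟨s, hs_sub, hs_card⟩ :=
        Finset.exists_subset_card_eq (hω : k ≤ (Finset.univ.filter fun i => p i ω ≤ t).card)
      refine Set.mem_iUnion.mpr ⟨s, Set.mem_iUnion.mpr
        ⟨Finset.mem_powersetCard.mpr ⟨Finset.subset_univ s, hs_card⟩, ?_⟩⟩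
      simp only [Set.mem_iInter]
      intro i hi
      exact (Finset.mem_filter.mp (hs_sub hi)).2
    calc ℙ {ω | k ≤ (Finset.univ.filter fun i => p i ω ≤ t).card}
        ≤ ℙ (⋃ s ∈ Finset.univ.powersetCard k (α := Fin n), ⋂ i ∈ s, p i ⁻¹' Set.Iic t) :=
          measure_mono hsub
      _ ≤ ∑ s ∈ Finset.univ.powersetCard k (α := Fin n), ℙ (⋂ i ∈ s, p i ⁻¹' Set.Iic t) :=
          measure_biUnion_finset_le _ _
      _ ≤ ∑ s ∈ Finset.univ.powersetCard k (α := Fin n), ENNReal.ofReal (c ^ k) := by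
          refine Finset.sum_le_sum fun s hs => ?_
          have hcard : s.card = k := (Finset.mem_powersetCard.mp hs).2
          have hprod : ℙ (⋂ i ∈ s, p i ⁻¹' Set.Iic t) = ∏ i ∈ s, ℙ (p i ⁻¹' Set.Iic t) :=
            hindep.measure_inter_preimage_eq_mul s (fun i _ => measurableSet_Iic)
          rw [hprod]
          calc ∏ i ∈ s, ℙ (p i ⁻¹' Set.Iic t) ≤ ∏ _i ∈ s, ENNReal.ofReal c := by
                refine Finset.prod_le_prod' fun i _ => ?_
                have := hmarg i k l hk
                simpa [ht, hc, Set.preimage, Set.Iic] using this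
            _ = ENNReal.ofReal c ^ k := by rw [Finset.prod_const, hcard]
            _ = ENNReal.ofReal (c ^ k) := (ENNReal.ofReal_pow hc0 k).symm
      _ = (n.choose k : ℕ) * ENNReal.ofReal (c ^ k) := by
          rw [Finset.sum_const, Finset.card_powersetCard, Finset.card_univ, Fintype.card_fin,
            nsmul_eq_mul]
      _ = ENNReal.ofReal ((n.choose k) * (((k : ℝ) + l) * (1 + δ) * β / N) ^ k) := by
          rw [← ENNReal.ofReal_natCast, ← ENNReal.ofReal_mul (by positivity)]
          congr 2
          rw [hc]; ring_nf
  · intro k l hk hkl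
    have hk0 : (0:ℝ) < k := by exact_mod_cast hk
    by_cases hkn : k + 1 ≤ n
    · set x : ℝ := ((k : ℝ) + l) * (1 + δ) * β / N with hx
      set y : ℝ := ((k : ℝ) + 1 + l) * (1 + δ) * β / N with hy
      have hx0 : 0 < x := by positivity
      have hy0 : 0 < y := by positivity
      have hkl0 : (0:ℝ) < (k:ℝ) + l := by positivity
      -- step 1: y ^ k ≤ exp 1 * x ^ k
      have hratio : y = x * (((k:ℝ) + 1 + l) / ((k:ℝ) + l)) := by
        rw [hx, hy]
        field_simp
      have hA : (((k:ℝ) + 1 + l) / ((k:ℝ) + l)) ^ k ≤ Real.exp 1 := by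
        have h1 : ((k:ℝ) + 1 + l) / ((k:ℝ) + l) = 1 + 1 / ((k:ℝ) + l) := by
          field_simp
          ring
        have h2 : (1 : ℝ) + 1 / ((k:ℝ) + l) ≤ Real.exp (1 / ((k:ℝ) + l)) := by
          have := Real.add_one_le_exp (1 / ((k:ℝ) + l)); linarith
        calc (((k:ℝ) + 1 + l) / ((k:ℝ) + l)) ^ k
            ≤ Real.exp (1 / ((k:ℝ) + l)) ^ k := by
              apply pow_le_pow_left₀ (by positivity) (by rw [h1]; exact h2)
          _ = Real.exp ((k:ℝ) / ((k:ℝ) + l)) := by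
              rw [← Real.exp_nat_mul]; congr 1; field_simp
          _ ≤ Real.exp 1 := by
              apply Real.exp_le_exp.mpr
              rw [div_le_one hkl0]
              have : (0:ℝ) ≤ l := Nat.cast_nonneg l
              linarith
      have hyk : y ^ k ≤ Real.exp 1 * x ^ k := by
        calc y ^ k = x ^ k * (((k:ℝ) + 1 + l) / ((k:ℝ) + l)) ^ k := by
              rw [hratio, mul_pow]
          _ ≤ x ^ k * Real.exp 1 := by
              exact mul_le_mul_of_nonneg_left hA (by positivity)
          _ = Real.exp 1 * x ^ k := mul_comm _ _
      -- step 2: (n.choose (k+1)) * y * exp 1 ≤ n.choose k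
      have hchoose_nat : n.choose (k + 1) * (k + 1) = n.choose k * (n - k) :=
        Nat.choose_succ_right_eq n k
      have hchoose : ((n.choose (k+1)):ℝ) * ((k:ℝ) + 1) = (n.choose k) * ((n:ℝ) - k) := by
        have hkle : k ≤ n := le_trans (Nat.le_succ k) hkn
        have h := congrArg (Nat.cast (R := ℝ)) hchoose_nat
        push_cast [Nat.cast_sub hkle] at h
        linarith [h]
      have hnk : (n:ℝ) - k ≤ (1 - γ) * N := by linarith
      have hnk0 : (0:ℝ) ≤ (n:ℝ) - k := by
        have : (k:ℝ) ≤ n := by exact_mod_cast le_trans (Nat.le_succ k) hkn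
        linarith
      have hkey : ((n:ℝ) - k) * ((k:ℝ) + 1 + l) ≤ 2 * ((k:ℝ) + 1) * N := by
        have h1 : ((n:ℝ) - k) * ((k:ℝ) + 1 + l) ≤ (1 - γ) * N * ((k:ℝ) + 1 + l) := by
          apply mul_le_mul_of_nonneg_right hnk (by positivity)
        have h2 : (1 - γ) * ((k:ℝ) + 1 + l) ≤ 2 * ((k:ℝ) + 1) := by
          have hl0 : (0:ℝ) ≤ l := Nat.cast_nonneg l
          nlinarith
        nlinarith [hN0.le]
      have he1 : (0:ℝ) < Real.exp 1 := Real.exp_pos 1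
      have hδβ : (0:ℝ) < (1 + δ) * β := by positivity
      have hm := mul_le_mul_of_nonneg_right hkey (mul_pos hδβ he1).le
      have hc2 : 2 * Real.exp 1 * ((1 + δ) * β) ≤ 1 := by nlinarith [hsmall]
      have h2 : 2 * Real.exp 1 * ((1+δ)*β) * (((k:ℝ)+1)*N) ≤ ((k:ℝ)+1)*N := by
        have h0 : (0:ℝ) ≤ ((k:ℝ)+1)*N := by positivity
        nlinarith [mul_le_mul_of_nonneg_right hc2 h0]
      have hkey2 : ((n:ℝ)-k) * (((k:ℝ)+1+l)*(1+δ)*β) * Real.exp 1 ≤ ((k:ℝ)+1)*N := by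
        nlinarith [hm, h2]
      have hyle : (((n:ℝ)-k) * y) * Real.exp 1 ≤ (k:ℝ)+1 := by
        have heq : (((n:ℝ)-k) * y) * Real.exp 1
            = (((n:ℝ)-k) * (((k:ℝ)+1+l)*(1+δ)*β) * Real.exp 1) / N := by
          rw [hy]; ring
        rw [heq, div_le_iff₀ hN0]
        exact hkey2
      have hstep2 : ((n.choose (k+1)):ℝ) * y * Real.exp 1 ≤ (n.choose k) := by
        have hC0 : (0:ℝ) ≤ (n.choose k) := Nat.cast_nonneg _
        have hpos : (0:ℝ) < (k:ℝ)+1 := by positivity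
        rw [← mul_le_mul_iff_of_pos_right hpos]
        calc ((n.choose (k+1)):ℝ) * y * Real.exp 1 * ((k:ℝ)+1)
            = (((n.choose (k+1)):ℝ) * ((k:ℝ)+1)) * (y * Real.exp 1) := by ring
          _ = ((n.choose k):ℝ) * ((n:ℝ)-k) * (y * Real.exp 1) := by rw [hchoose]
          _ = ((n.choose k):ℝ) * ((((n:ℝ)-k) * y) * Real.exp 1) := by ring
          _ ≤ ((n.choose k):ℝ) * ((k:ℝ)+1) := mul_le_mul_of_nonneg_left hyle hC0
      calc ((n.choose (k + 1)) : ℝ) * y ^ (k + 1)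
          = ((n.choose (k+1)):ℝ) * y * y ^ k := by ring
        _ ≤ ((n.choose (k+1)):ℝ) * y * (Real.exp 1 * x ^ k) := by
            apply mul_le_mul_of_nonneg_left hyk (by positivity)
        _ = (((n.choose (k+1)):ℝ) * y * Real.exp 1) * x ^ k := by ring
        _ ≤ ((n.choose k):ℝ) * x ^ k := by
            apply mul_le_mul_of_nonneg_right hstep2 (by positivity)
    · push_neg at hkn
      rw [Nat.choose_eq_zero_of_lt hkn]
      simp only [Nat.cast_zero, zero_mul]
      positivity
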